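/- Let α and β be irrational real numbers. Then the following are equivalent: (i) there exists a nonzero real number a such that the image of ℤ + αℤ under multiplication by a is exactly ℤ + βℤ (i.e., a·(ℤ + αℤ) = ℤ + βℤ as subsets of ℝ); (ii) there exist integers a, b, c, d with a·d − b·c = 1 or a·d − b·c = −1, and α = (a + b·β)/(c + d·β). -/

import Mathlib

lemma indep_of_irrational {β : ℝ} (hβ : Irrational β) {p q p' q' : ℤ}
    (h : (p : ℝ) + (q : ℝ) * β = (p' : ℝ) + (q' : ℝ) * β) : p = p' ∧ q = q' := by
  have hq : q = q' := by
    by_contra hne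
    apply hβ
    refine ⟨((p - p' : ℤ) : ℚ) / ((q' - q : ℤ) : ℚ), ?_⟩
    have h0 : ((q' : ℝ) - (q : ℝ)) ≠ 0 := by
      have hq' : q' ≠ q := fun hh => hne hh.symm
      have : (q' : ℝ) ≠ (q : ℝ) := by exact_mod_cast hq'
      exact sub_ne_zero.mpr this
    push_cast
    rw [div_eq_iff h0]
    linarith
  constructor
  · have : (p : ℝ) = (p' : ℝ) := by
      rw [hq] at h; linarith
    exact_mod_cast this
  · exact hq

/-- For irrational `α, β`: there is a nonzero real `a` with
`a·(ℤ + αℤ) = ℤ + βℤ` (as subsets of `ℝ`) iff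
`α = (a + bβ)/(c + dβ)` for some integers `a, b, c, d` with `ad - bc = ±1`. -/
theorem mul_lattice_eq_iff_moebius_det_pm_one (α β : ℝ)
    (hα : Irrational α) (hβ : Irrational β) :
    (∃ a : ℝ, a ≠ 0 ∧
        (fun x : ℝ => a * x) '' {x : ℝ | ∃ m n : ℤ, x = (m : ℝ) + (n : ℝ) * α} =
          {x : ℝ | ∃ p q : ℤ, x = (p : ℝ) + (q : ℝ) * β}) ↔
    (∃ a b c d : ℤ, (a * d - b * c = 1 ∨ a * d - b * c = -1) ∧
        α = ((a : ℝ) + (b : ℝ) * β) / ((c : ℝ) + (d : ℝ) * β)) := by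
  constructor
  · rintro ⟨a, ha, h⟩
    -- a = c + dβ
    have h1 : a ∈ {x : ℝ | ∃ p q : ℤ, x = (p : ℝ) + (q : ℝ) * β} := by
      rw [← h]
      exact ⟨1, ⟨1, 0, by push_cast; ring⟩, by simp⟩
    obtain ⟨c, d, hcd⟩ := h1
    -- a*α = a' + b'β
    have h2 : a * α ∈ {x : ℝ | ∃ p q : ℤ, x = (p : ℝ) + (q : ℝ) * β} := by
      rw [← h]
      exact ⟨α, ⟨0, 1, by push_cast; ring⟩, rfl⟩
    obtain ⟨a', b', hab⟩ := h2
    -- 1 = a*(p + qα)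
    have h3 : (1 : ℝ) ∈ (fun x : ℝ => a * x) ''
        {x : ℝ | ∃ m n : ℤ, x = (m : ℝ) + (n : ℝ) * α} := by
      rw [h]; exact ⟨1, 0, by push_cast; ring⟩
    obtain ⟨x1, ⟨p, q, hx1⟩, hax1⟩ := h3
    rw [hx1] at hax1
    -- β = a*(r + sα)
    have h4 : β ∈ (fun x : ℝ => a * x) ''
        {x : ℝ | ∃ m n : ℤ, x = (m : ℝ) + (n : ℝ) * α} := by
      rw [h]; exact ⟨0, 1, by push_cast; ring⟩
    obtain ⟨x2, ⟨r, s, hx2⟩, hax2⟩ := h4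
    rw [hx2] at hax2
    -- integer relations
    have key1 : ((p * c + q * a' : ℤ) : ℝ) + ((p * d + q * b' : ℤ) : ℝ) * β
        = ((1 : ℤ) : ℝ) + ((0 : ℤ) : ℝ) * β := by
      push_cast
      linear_combination (-(p : ℝ)) * hcd + (-(q : ℝ)) * hab + hax1
    have key2 : ((r * c + s * a' : ℤ) : ℝ) + ((r * d + s * b' : ℤ) : ℝ) * β
        = ((0 : ℤ) : ℝ) + ((1 : ℤ) : ℝ) * β := by
      push_cast
      linear_combination (-(r : ℝ)) * hcd + (-(s : ℝ)) * hab + hax2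
    obtain ⟨e1, e2⟩ := indep_of_irrational hβ key1
    obtain ⟨e3, e4⟩ := indep_of_irrational hβ key2
    have hdet : (p * s - q * r) * (c * b' - d * a') = 1 := by
      linear_combination (r * d + s * b') * e1 - (r * c + s * a') * e2 + e4
    have hu : c * b' - d * a' = 1 ∨ c * b' - d * a' = -1 :=
      Int.isUnit_iff.mp (IsUnit.of_mul_eq_one (p * s - q * r) (by linear_combination hdet))
    refine ⟨a', b', c, d, ?_, ?_⟩
    · rcases hu with hu | hu
      · right; linear_combination -hu
      · left; linear_combination -hu
    · rw [← hcd, ← hab]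
      exact (mul_div_cancel_left₀ α ha).symm
  · rintro ⟨a, b, c, d, hdet, heq⟩
    have ht : (c : ℝ) + (d : ℝ) * β ≠ 0 := by
      intro h0
      rw [h0, div_zero] at heq
      exact hα.ne_zero heq
    have htα : ((c : ℝ) + (d : ℝ) * β) * α = (a : ℝ) + (b : ℝ) * β := by
      rw [heq, mul_div_cancel₀ _ ht]
    refine ⟨(c : ℝ) + (d : ℝ) * β, ht, ?_⟩
    ext x
    constructor
    · rintro ⟨y, ⟨m, n, hy⟩, hxy⟩
      refine ⟨m * c + n * a, m * d + n * b, ?_⟩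
      rw [← hxy, hy]
      push_cast
      linear_combination (n : ℝ) * htα
    · rintro ⟨p, q, hx⟩
      obtain ⟨m, n, hm, hn⟩ : ∃ m n : ℤ, m * c + n * a = p ∧ m * d + n * b = q := by
        have he2 : (a * d - b * c) * (a * d - b * c) = 1 := by
          rcases hdet with h | h <;> rw [h] <;> norm_num
        exact ⟨-(a * d - b * c) * (p * b - a * q), -(a * d - b * c) * (c * q - d * p),
          by linear_combination p * he2, by linear_combination q * he2⟩
      refine ⟨(m : ℝ) + (n : ℝ) * α, ⟨m, n, rfl⟩, ?_⟩
      have hm' : (m : ℝ) * c + n * a = p := by exact_mod_cast congrArg (Int.cast : ℤ → ℝ) hm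
      have hn' : (m : ℝ) * d + n * b = q := by exact_mod_cast congrArg (Int.cast : ℤ → ℝ) hn
      rw [hx]
      linear_combination (n : ℝ) * htα + hm' + β * hn'
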